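/- Let Γ be a maximal consistent set in SLKVF + EXT. Define Γ_Kv = {d ∈ Q : Kv(d) ∈ Γ}, C^{+Γ} = {d ∈ Q : Kf(C,d) ∈ Γ} for finite C ⊆ Q, and M_Γ = {C^{+Γ} : C a finite subset of Q}. Let g : M_Γ × {0,1} → G be an injection and define V_p(⟨X,i⟩, d) = g(∅^{+Γ}, 0) if d ∈ Γ_Kv, = g(X,0) if d ∈ X \\ Γ_Kv, and = g(X,i) if d ∈ Q \\ X. Then for all finite C ⊆ Q and d ∈ Q: (1) if Kv(d) ∈ Γ then there is x ∈ G with V_p(⟨X,i⟩,d) = x for all ⟨X,i⟩ ∈ M_Γ×{0,1}; (2) if Kv(d) ∉ Γ then there are ⟨X,i⟩, ⟨X',i'⟩ with V_p(⟨X,i⟩,d) ≠ V_p(⟨X',i'⟩,d); (3) if Kf(C,d) ∈ Γ then for all ⟨X,i⟩, ⟨X',i'⟩, V_p(⟨X,i⟩,C) = V_p(⟨X',i'⟩,C) implies V_p(⟨X,i⟩,d) = V_p(⟨X',i'⟩,d); (4) if Kf(C,d) ∉ Γ then there are ⟨X,i⟩, ⟨X',i'⟩ with V_p(⟨X,i⟩,C)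 = V_p(⟨X',i'⟩,C) and V_p(⟨X,i⟩,d) ≠ V_p(⟨X',i'⟩,d). -/

import Mathlib

open scoped Classical

/-! Single-agent language `LKVF` with operators `Kv`, `Kf` and `K`. -/

inductive Formula (P Q : Type) : Type where
  | top : Formula P Q
  | atom : P → Formula P Q
  | Kv : Q → Formula P Q
  | Kf : Finset Q → Q → Formula P Q
  | and : Formula P Q → Formula P Q → Formula P Q
  | not : Formula P Q → Formula P Q
  | K : Formula P Q → Formula P Q

namespace Formula

variable {P Q : Type}

/-- Material implication, defined from `and` and `not`. -/
def imp (φ ψ : Formula P Q) : Formula P Q := Formula.not (Formula.and φ (Formula.not ψ))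

/-- Falsum. -/
def bot : Formula P Q := Formula.not Formula.top

/-- Disjunction. -/
def or (φ ψ : Formula P Q) : Formula P Q :=
  Formula.not (Formula.and (Formula.not φ) (Formula.not ψ))

end Formula

variable {P Q G : Type}

/-- Finite conjunction of a list of formulas. -/
def conj : List (Formula P Q) → Formula P Q
  | [] => Formula.top
  | φ :: l => Formula.and φ (conj l)

/-- Finite disjunction of a list of formulas. -/
def disj : List (Formula P Q) → Formula P Q
  | [] => Formula.bot
  | φ :: l => Formula.or φ (disj l)

/-- `φ` is a propositional tautology: every Boolean valuation commuting with the
Boolean connectives makes it true. -/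
def IsTaut (φ : Formula P Q) : Prop :=
  ∀ v : Formula P Q → Bool,
    v Formula.top = true →
    (∀ α β, v (Formula.and α β) = (v α && v β)) →
    (∀ α, v (Formula.not α) = (! v α)) →
    v φ = true

section Axioms

variable (P Q : Type) [LinearOrder Q]

/-- `⋀_{d ∈ D} Kf(C,d)`. -/
def finConjKf (C D : Finset Q) : Formula P Q :=
  conj ((D.sort (· ≤ ·)).map fun d => Formula.Kf C d)

/-- `⋀_{c ∈ C} Kv(c)`. -/
def finConjKv (C : Finset Q) : Formula P Q :=
  conj ((C.sort (· ≤ ·)).map fun c => Formula.Kv c)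

/-- The axioms of the base system `SLKVF`. -/
inductive SLKVF : Formula P Q → Prop where
  | taut {φ : Formula P Q} : IsTaut φ → SLKVF φ
  | axK (φ ψ : Formula P Q) :
      SLKVF (Formula.imp (Formula.K (Formula.imp φ ψ))
        (Formula.imp (Formula.K φ) (Formula.K ψ)))
  | axT (φ : Formula P Q) : SLKVF (Formula.imp (Formula.K φ) φ)
  | ax4 (φ : Formula P Q) : SLKVF (Formula.imp (Formula.K φ) (Formula.K (Formula.K φ)))
  | ax5 (φ : Formula P Q) :
      SLKVF (Formula.imp (Formula.not (Formula.K φ)) (Formula.K (Formula.not (Formula.K φ))))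
  | kv4 (d : Q) : SLKVF (Formula.imp (Formula.Kv d) (Formula.K (Formula.Kv d)))
  | kv5 (d : Q) :
      SLKVF (Formula.imp (Formula.not (Formula.Kv d)) (Formula.K (Formula.not (Formula.Kv d))))
  | kf4 (C : Finset Q) (d : Q) :
      SLKVF (Formula.imp (Formula.Kf C d) (Formula.K (Formula.Kf C d)))
  | kf5 (C : Finset Q) (d : Q) :
      SLKVF (Formula.imp (Formula.not (Formula.Kf C d))
        (Formula.K (Formula.not (Formula.Kf C d))))
  | proj {C : Finset Q} {c : Q} : c ∈ C → SLKVF (Formula.Kf C c)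
  | tran (C D : Finset Q) (e : Q) :
      SLKVF (Formula.imp (Formula.and (finConjKf P Q C D) (Formula.Kf D e)) (Formula.Kf C e))
  | vf (C : Finset Q) (d : Q) :
      SLKVF (Formula.imp (Formula.and (finConjKv P Q C) (Formula.Kf C d)) (Formula.Kv d))

end Axioms

/-- Provability from an axiom set `Ax` with rules modus ponens and necessitation. -/
inductive Prov (Ax : Formula P Q → Prop) : Formula P Q → Prop where
  | ax {φ : Formula P Q} : Ax φ → Prov Ax φ
  | mp {φ ψ : Formula P Q} : Prov Ax (Formula.imp φ ψ) → Prov Ax φ → Prov Ax ψ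
  | nec {φ : Formula P Q} : Prov Ax φ → Prov Ax (Formula.K φ)

/-- `Γ` is consistent: no finite conjunction of its members proves `⊥`. -/
def Consistent (Ax : Formula P Q → Prop) (Γ : Set (Formula P Q)) : Prop :=
  ¬ ∃ L : List (Formula P Q), (∀ φ ∈ L, φ ∈ Γ) ∧ Prov Ax (Formula.imp (conj L) Formula.bot)

/-- `Γ` is maximal consistent. -/
def MCS (Ax : Formula P Q → Prop) (Γ : Set (Formula P Q)) : Prop :=
  Consistent Ax Γ ∧ ∀ φ : Formula P Q, φ ∈ Γ ∨ Formula.not φ ∈ Γ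

/-! Function domains: sets of finitary functions on the value domain `G`. -/

/-- A function domain on `G`: a set of `n`-ary functions on `G` for various `n`. -/
abbrev FnDom (G : Type) : Type := Set (Σ n : ℕ, (Fin n → G) → G)

/-- `F` contains all projection functions `id_{i,j}` for `0 < i ≤ j`. -/
def hasProjections (F : FnDom G) : Prop :=
  ∀ (j : ℕ) (k : Fin j), (⟨j, fun x => x k⟩ : Σ n : ℕ, (Fin n → G) → G) ∈ F

/-- `F` is closed under composition: for an `n`-ary `f ∈ F` with `n ≥ 1` and
`m`-ary `g₁, …, gₙ ∈ F`, the composition `f(g₁(·),…,gₙ(·))` is in `F`. -/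
def closedComp (F : FnDom G) : Prop :=
  ∀ (n m : ℕ), 0 < n → ∀ f : (Fin n → G) → G,
    (⟨n, f⟩ : Σ n : ℕ, (Fin n → G) → G) ∈ F →
    ∀ g : Fin n → (Fin m → G) → G,
      (∀ k, (⟨m, g k⟩ : Σ n : ℕ, (Fin n → G) → G) ∈ F) →
      (⟨m, fun x => f fun k => g k x⟩ : Σ n : ℕ, (Fin n → G) → G) ∈ F

/-- The tuple of values of the variables of the finite set `C`, in the fixed
(increasing) order of its elements. -/
def tupleV [LinearOrder Q] (v : Q → G) (C : Finset Q) : Fin C.card → G :=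
  fun k => v ((C.sort (· ≤ ·)).get (Fin.cast (Finset.length_sort (s := C) (· ≤ ·)).symm k))

/-- A model of `LKVF`: worlds, an assignment of propositional letters and an
assignment of values to variables. -/
structure Model (P Q G : Type) : Type 1 where
  W : Type
  U : W → P → Prop
  V : W → Q → G

variable [LinearOrder Q]

/-- Truth of a formula at a world of a model, relative to a function domain `F`. -/
def sat (F : FnDom G) (M : Model P Q G) (w : M.W) : Formula P Q → Prop
  | Formula.top => True
  | Formula.atom p => M.U w p
  | Formula.Kv d => ∃ x : G, ∀ w' : M.W, M.V w' d = x
  | Formula.Kf C d =>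
      ∃ f : (Fin C.card → G) → G,
        (⟨C.card, f⟩ : Σ n : ℕ, (Fin n → G) → G) ∈ F ∧
        ∀ w' : M.W, M.V w' d = f (tupleV (M.V w') C)
  | Formula.and φ ψ => sat F M w φ ∧ sat F M w ψ
  | Formula.not φ => ¬ sat F M w φ
  | Formula.K φ => ∀ w' : M.W, sat F M w' φ

/-- Validity over all models built on the value domain `G` and function domain `F`. -/
def Valid (F : FnDom G) (φ : Formula P Q) : Prop :=
  ∀ (M : Model P Q G) (w : M.W), sat F M w φ

/-! STATEMENT 5: properties of the valuation `V_p` built from a maximal consistent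
set in `SLKVF + EXT` via an injection `g : M_Γ × {0,1} → G`. -/

/-- The axiom system `SLKVF + EXT`. -/
def AxExt (P Q : Type) [LinearOrder Q] : Formula P Q → Prop := fun φ =>
  SLKVF P Q φ ∨ ∃ (d : Q) (C : Finset Q), φ = Formula.imp (Formula.Kv d) (Formula.Kf C d)

/-- `C^{+Γ} = {d : Kf(C,d) ∈ Γ}`. -/
def plusSet {P Q : Type} (Γ : Set (Formula P Q)) (C : Finset Q) : Set Q :=
  {d : Q | Formula.Kf C d ∈ Γ}

/-- `Γ_Kv = {d : Kv(d) ∈ Γ}`. -/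
def GKv {P Q : Type} (Γ : Set (Formula P Q)) : Set Q := {d : Q | Formula.Kv d ∈ Γ}

/-- `M_Γ`, the collection of all finitely generated closed sets. -/
def MGamma {P Q : Type} (Γ : Set (Formula P Q)) : Set (Set Q) :=
  {X : Set Q | ∃ C : Finset Q, X = plusSet Γ C}

/-- The valuation `V_p` on `M_Γ × {0,1}`:
`g(∅^{+Γ},0)` if `d ∈ Γ_Kv`, `g(X,0)` if `d ∈ X \ Γ_Kv`, and `g(X,i)` if `d ∉ X`. -/
noncomputable def Vp {P Q G : Type} (Γ : Set (Formula P Q)) (g : Set Q → Bool → G)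
    (X : Set Q) (i : Bool) (d : Q) : G :=
  if Formula.Kv d ∈ Γ then g (plusSet Γ (∅ : Finset Q)) false
  else if d ∈ X then g X false
  else g X i

section MCSAux

variable {P Q : Type} {Ax : Formula P Q → Prop} {Γ : Set (Formula P Q)}

lemma mcs_prov (h : MCS Ax Γ) (htaut : ∀ ψ : Formula P Q, IsTaut ψ → Ax ψ)
    {φ : Formula P Q} (hp : Prov Ax φ) : φ ∈ Γ := by
  rcases h.2 φ with hφ | hn
  · exact hφ
  · exfalso
    apply h.1
    refine ⟨[Formula.not φ], by simpa using hn, ?_⟩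
    have t : IsTaut (Formula.imp φ (Formula.imp (conj [Formula.not φ]) Formula.bot)) := by
      intro v h1 h2 h3
      simp only [Formula.imp, Formula.bot, conj, h1, h2, h3]
      cases v φ <;> rfl
    exact Prov.mp (Prov.ax (htaut _ t)) hp

lemma mcs_top (h : MCS Ax Γ) (htaut : ∀ ψ : Formula P Q, IsTaut ψ → Ax ψ) :
    (Formula.top : Formula P Q) ∈ Γ :=
  mcs_prov h htaut (Prov.ax (htaut _ (fun _ h1 _ _ => h1)))

lemma mcs_mp (h : MCS Ax Γ) (htaut : ∀ ψ : Formula P Q, IsTaut ψ → Ax ψ)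
    {φ ψ : Formula P Q} (h1 : Formula.imp φ ψ ∈ Γ) (h2 : φ ∈ Γ) : ψ ∈ Γ := by
  rcases h.2 ψ with hψ | hn
  · exact hψ
  · exfalso
    apply h.1
    refine ⟨[Formula.imp φ ψ, φ, Formula.not ψ], by simp [h1, h2, hn], ?_⟩
    have t : IsTaut (Formula.imp (conj [Formula.imp φ ψ, φ, Formula.not ψ]) Formula.bot) := by
      intro v ht ha hnn
      simp only [Formula.imp, Formula.bot, conj, ht, ha, hnn]
      cases v φ <;> cases v ψ <;> rfl
    exact Prov.ax (htaut _ t)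

lemma mcs_and (h : MCS Ax Γ) (htaut : ∀ ψ : Formula P Q, IsTaut ψ → Ax ψ)
    {φ ψ : Formula P Q} (h1 : φ ∈ Γ) (h2 : ψ ∈ Γ) : Formula.and φ ψ ∈ Γ := by
  have t : IsTaut (Formula.imp φ (Formula.imp ψ (Formula.and φ ψ))) := by
    intro v ht ha hnn
    simp only [Formula.imp, ha, hnn]
    cases v φ <;> cases v ψ <;> rfl
  exact mcs_mp h htaut (mcs_mp h htaut (mcs_prov h htaut (Prov.ax (htaut _ t))) h1) h2

lemma mcs_conj (h : MCS Ax Γ) (htaut : ∀ ψ : Formula P Q, IsTaut ψ → Ax ψ)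
    {L : List (Formula P Q)} (hL : ∀ φ ∈ L, φ ∈ Γ) : conj L ∈ Γ := by
  induction L with
  | nil => exact mcs_top h htaut
  | cons φ l ih =>
      exact mcs_and h htaut (hL φ (by simp)) (ih fun ψ hψ => hL ψ (by simp [hψ]))

end MCSAux

section ExtAux

variable {P Q : Type} [LinearOrder Q] {Γ : Set (Formula P Q)}

lemma mem_ax (h : MCS (AxExt P Q) Γ) {φ : Formula P Q} (hφ : SLKVF P Q φ) : φ ∈ Γ :=
  mcs_prov h (fun _ ht => Or.inl (SLKVF.taut ht)) (Prov.ax (Or.inl hφ))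

lemma ext_mem (h : MCS (AxExt P Q) Γ) {d : Q} (C : Finset Q)
    (hd : Formula.Kv d ∈ Γ) : Formula.Kf C d ∈ Γ :=
  mcs_mp h (fun _ ht => Or.inl (SLKVF.taut ht))
    (mcs_prov h (fun _ ht => Or.inl (SLKVF.taut ht)) (Prov.ax (Or.inr ⟨d, C, rfl⟩))) hd

lemma vf_mem (h : MCS (AxExt P Q) Γ) {C : Finset Q} {d : Q}
    (hC : ∀ c ∈ C, Formula.Kv c ∈ Γ) (hd : Formula.Kf C d ∈ Γ) : Formula.Kv d ∈ Γ := by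
  have htaut : ∀ ψ : Formula P Q, IsTaut ψ → AxExt P Q ψ := fun _ ht => Or.inl (SLKVF.taut ht)
  have h1 : finConjKv P Q C ∈ Γ := by
    apply mcs_conj h htaut
    intro φ hφ
    simp only [List.mem_map] at hφ
    obtain ⟨c, hc, rfl⟩ := hφ
    exact hC c ((Finset.mem_sort _).1 hc)
  exact mcs_mp h htaut (mem_ax h (SLKVF.vf C d)) (mcs_and h htaut h1 hd)

lemma tran_mem (h : MCS (AxExt P Q) Γ) {C D : Finset Q} {d : Q}
    (hC : ∀ c ∈ D, Formula.Kf C c ∈ Γ) (hd : Formula.Kf D d ∈ Γ) : Formula.Kf C d ∈ Γ := by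
  have htaut : ∀ ψ : Formula P Q, IsTaut ψ → AxExt P Q ψ := fun _ ht => Or.inl (SLKVF.taut ht)
  have h1 : finConjKf P Q C D ∈ Γ := by
    apply mcs_conj h htaut
    intro φ hφ
    simp only [List.mem_map] at hφ
    obtain ⟨c, hc, rfl⟩ := hφ
    exact hC c ((Finset.mem_sort _).1 hc)
  exact mcs_mp h htaut (mem_ax h (SLKVF.tran C D d)) (mcs_and h htaut h1 hd)

end ExtAux

lemma tupleV_eq_iff {Q G : Type} [LinearOrder Q] (v v' : Q → G) (C : Finset Q) :
    tupleV v C = tupleV v' C ↔ ∀ c ∈ C, v c = v' c := by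
  constructor
  · intro h c hc
    have hc' : c ∈ C.sort (· ≤ ·) := (Finset.mem_sort _).2 hc
    obtain ⟨n, hn, hk⟩ := List.mem_iff_getElem.1 hc'
    have hn' : n < C.card := by simpa using hn
    have := congrFun h ⟨n, hn'⟩
    simpa [tupleV, hk] using this
  · intro h
    funext k
    apply h
    exact (Finset.mem_sort _).1 (List.get_mem _ _)
theorem statement5 (P Q G : Type) [Countable P] [Infinite P] [LinearOrder Q]
    (Γ : Set (Formula P Q)) (hΓ : MCS (AxExt P Q) Γ)
    (g : Set Q → Bool → G)
    (hg : ∀ X ∈ MGamma Γ, ∀ X' ∈ MGamma Γ, ∀ i i' : Bool,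
      g X i = g X' i' → X = X' ∧ i = i') :
    (∀ d : Q, Formula.Kv d ∈ Γ →
      ∃ x : G, ∀ X ∈ MGamma Γ, ∀ i : Bool, Vp Γ g X i d = x) ∧
    (∀ d : Q, Formula.Kv d ∉ Γ →
      ∃ X ∈ MGamma Γ, ∃ X' ∈ MGamma Γ, ∃ i i' : Bool,
        Vp Γ g X i d ≠ Vp Γ g X' i' d) ∧
    (∀ (C : Finset Q) (d : Q), Formula.Kf C d ∈ Γ →
      ∀ X ∈ MGamma Γ, ∀ X' ∈ MGamma Γ, ∀ i i' : Bool,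
        tupleV (Vp Γ g X i) C = tupleV (Vp Γ g X' i') C →
          Vp Γ g X i d = Vp Γ g X' i' d) ∧
    (∀ (C : Finset Q) (d : Q), Formula.Kf C d ∉ Γ →
      ∃ X ∈ MGamma Γ, ∃ X' ∈ MGamma Γ, ∃ i i' : Bool,
        tupleV (Vp Γ g X i) C = tupleV (Vp Γ g X' i') C ∧
          Vp Γ g X i d ≠ Vp Γ g X' i' d) := by
  have hE : plusSet Γ (∅ : Finset Q) ∈ MGamma Γ := ⟨∅, rfl⟩
  refine ⟨?_, ?_, ?_, ?_⟩
  · intro d hd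
    exact ⟨g (plusSet Γ (∅ : Finset Q)) false, fun X _ i => by simp [Vp, hd]⟩
  · intro d hd
    refine ⟨_, hE, _, hE, false, true, ?_⟩
    have hdX : d ∉ plusSet Γ (∅ : Finset Q) := fun h =>
      hd (vf_mem hΓ (by simp) h)
    simp only [Vp, if_neg hd, if_neg hdX]
    intro he
    exact Bool.false_ne_true ((hg _ hE _ hE _ _ he).2)
  · intro C d hCd X hX X' hX' i i' htup
    by_cases hd : Formula.Kv d ∈ Γ
    · simp [Vp, hd]
    · have hpt := (tupleV_eq_iff _ _ C).1 htup
      have hex : ∃ c ∈ C, Formula.Kv c ∉ Γ := by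
        by_contra h
        push_neg at h
        exact hd (vf_mem hΓ h hCd)
      obtain ⟨c, hcC, hc⟩ := hex
      have hXX' : X = X' := by
        have h1 := hpt c hcC
        simp only [Vp, if_neg hc] at h1
        split_ifs at h1 <;> exact (hg X hX X' hX' _ _ h1).1
      subst hXX'
      by_cases hdX : d ∈ X
      · simp [Vp, if_neg hd, hdX]
      · obtain ⟨D, rfl⟩ := hX
        have hex2 : ∃ c' ∈ C, c' ∉ plusSet Γ D ∧ Formula.Kv c' ∉ Γ := by
          by_contra h
          push_neg at h
          apply hdX
          refine tran_mem hΓ (fun c' hc' => ?_) hCd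
          by_cases hm : c' ∈ plusSet Γ D
          · exact hm
          · exact ext_mem hΓ D (h c' hc' hm)
        obtain ⟨c', hc'C, hc'X, hc'⟩ := hex2
        have h2 := hpt c' hc'C
        simp only [Vp, if_neg hc', if_neg hc'X] at h2
        have hii : i = i' := (hg _ ⟨D, rfl⟩ _ ⟨D, rfl⟩ _ _ h2).2
        subst hii
        rfl
  · intro C d hCd
    have hd : Formula.Kv d ∉ Γ := fun h => hCd (ext_mem hΓ C h)
    have hdX : d ∉ plusSet Γ C := hCd
    have hC : plusSet Γ C ∈ MGamma Γ := ⟨C, rfl⟩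
    refine ⟨_, hC, _, hC, false, true, ?_, ?_⟩
    · apply (tupleV_eq_iff _ _ C).2
      intro c hc
      have hm : c ∈ plusSet Γ C := mem_ax hΓ (SLKVF.proj hc)
      simp [Vp, hm]
    · simp only [Vp, if_neg hd, if_neg hdX]
      intro he
      exact Bool.false_ne_true ((hg _ hC _ hC _ _ he).2)
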